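/- Let A be a matrix over a field F representing a matroid M, and let K ⊆ F be a set with −K = K such that every non-zero subdeterminant of A belongs to K. Then there exists a non-zero α ∈ F and a standard representation of M all of whose non-zero entries belong to αK. -/

import Mathlib

open Matrix Submodule Module

private lemma aux_enum {V n : Type*} {t : Set V} [Fintype t] {v : n → V}
    (hts : t ⊆ Set.range v) {r : ℕ} (hcard : Fintype.card t = r) :
    ∃ (g : Fin r → n) (e : Fin r ≃ t), v ∘ g = Subtype.val ∘ e := by
  let e : Fin r ≃ t := (Fintype.equivFinOfCardEq hcard).symm
  choose g hg using fun i : Fin r => hts (e i).2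
  exact ⟨g, e, funext hg⟩

theorem stmt10 {m n F : Type*} [Fintype m] [Fintype n] [Field F]
    (A : Matrix m n F) (K : Set F) (hK : ∀ x : F, x ∈ K ↔ -x ∈ K)
    (hsub : ∀ (k : ℕ) (f : Fin k → m) (g : Fin k → n), Function.Injective f →
      Function.Injective g → (A.submatrix f g).det ≠ 0 → (A.submatrix f g).det ∈ K) :
    ∃ (α : F) (r : ℕ) (B : Matrix (Fin r) n F),
      α ≠ 0 ∧
      (∃ g : Fin r → n, Function.Injective g ∧
        ∀ i i' : Fin r, B i (g i') = if i = i' then 1 else 0) ∧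
      (∀ i j, B i j ≠ 0 → ∃ κ ∈ K, B i j = α * κ) ∧
      (∀ S : Set n, LinearIndependent F (fun j : S => Matrix.transpose A j.1) ↔
        LinearIndependent F (fun j : S => Matrix.transpose B j.1)) := by
  classical
  -- choose a basis of the column space from among the columns
  obtain ⟨t, hts, hspan, hli⟩ := exists_linearIndependent F (Set.range Aᵀ)
  haveI : Fintype t := ((Set.finite_range Aᵀ).subset hts).fintype
  set r := Fintype.card t with hr
  obtain ⟨g, e, hge⟩ := aux_enum hts hr.symm
  have hginj : Function.Injective g := by
    have : Function.Injective (Aᵀ ∘ g) := by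
      rw [hge]; exact Subtype.val_injective.comp e.injective
    exact Function.Injective.of_comp this
  have hrange : Set.range (Aᵀ ∘ g) = t := by
    rw [hge, Set.range_comp, Equiv.range_eq_univ, Set.image_univ, Subtype.range_coe]
  -- the submatrix of chosen columns
  set C : Matrix m (Fin r) F := A.submatrix id g with hC
  have hCT : Cᵀ = Aᵀ ∘ g := by funext i x; rfl
  have hrankC : C.rank = r := by
    rw [Matrix.rank_eq_finrank_span_cols, Matrix.col, hCT, hrange,
      finrank_span_set_eq_card hli, Set.toFinset_card]
  -- choose rows making an invertible square submatrix
  obtain ⟨t', ht's, hspan', hli'⟩ := exists_linearIndependent F (Set.range (fun x => C x))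
  haveI : Fintype t' := ((Set.finite_range _).subset ht's).fintype
  have hcard' : Fintype.card t' = r := by
    have h1 : finrank F (span F t') = r := by
      rw [hspan']
      have : Set.range (fun x => C x) = Set.range (Cᵀ).col := by
        funext; rw [Matrix.col, transpose_transpose]
      rw [this, ← Matrix.rank_eq_finrank_span_cols, Matrix.rank_transpose, hrankC]
    rw [← Set.toFinset_card, ← finrank_span_set_eq_card hli', h1]
  obtain ⟨f, e', hfe⟩ := aux_enum ht's hcard'
  have hfinj : Function.Injective f := by
    have : Function.Injective ((fun x => C x) ∘ f) := by
      rw [hfe]; exact Subtype.val_injective.comp e'.injective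
    exact Function.Injective.of_comp this
  set D : Matrix (Fin r) (Fin r) F := A.submatrix f g with hD
  have hrowsD : (fun i => D i) = (fun x => C x) ∘ f := by funext i k; rfl
  have hliD : LinearIndependent F (fun i => D i) := by
    rw [hrowsD, hfe]; exact hli'.comp e' e'.injective
  have hunit : IsUnit D := Matrix.linearIndependent_rows_iff_isUnit.mp hliD
  have hdet : IsUnit D.det := (Matrix.isUnit_iff_isUnit_det D).mp hunit
  have hdetne : D.det ≠ 0 := hdet.ne_zero
  have hDinv : D⁻¹ * D = 1 := Matrix.nonsing_inv_mul D hdet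
  set B : Matrix (Fin r) n F := D⁻¹ * A.submatrix f id with hB
  set α : F := (D.det)⁻¹ with hα
  have hαne : α ≠ 0 := inv_ne_zero hdetne
  -- entries after Cramer
  have hBij : ∀ i j, B i j = α * (A.submatrix f (Function.update g i j)).det := by
    intro i j
    have h1 : B i j = (D⁻¹.mulVec fun k => A (f k) j) i := by
      simp [hB, Matrix.mul_apply, Matrix.mulVec, dotProduct]
    have h2 : D⁻¹ = Ring.inverse D.det • D.adjugate := Matrix.inv_def D
    rw [h1, h2]
    have h3 : (D.adjugate.mulVec fun k => A (f k) j) i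
        = (D.updateCol i fun k => A (f k) j).det := by
      rw [← Matrix.cramer_eq_adjugate_mulVec, Matrix.cramer_apply]
    have h4 : D.updateCol i (fun k => A (f k) j)
        = A.submatrix f (Function.update g i j) := by
      ext k l
      rw [Matrix.updateCol_apply, Matrix.submatrix_apply, Function.update_apply]
      split <;> rfl
    rw [Matrix.smul_mulVec, Pi.smul_apply, h3, h4, smul_eq_mul,
      Ring.inverse_eq_inv']
  refine ⟨α, r, B, hαne, ⟨g, hginj, ?_⟩, ?_, ?_⟩
  · -- identity columns
    intro i i'
    have : B i (g i') = (D⁻¹ * D) i i' := by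
      simp [hB, hD, Matrix.mul_apply]
    rw [this, hDinv, Matrix.one_apply]
  · -- entries in α • K
    intro i j hne
    by_cases hinj : Function.Injective (Function.update g i j)
    · refine ⟨(A.submatrix f (Function.update g i j)).det, ?_, hBij i j⟩
      apply hsub r f _ hfinj hinj
      intro h0
      exact hne (by rw [hBij i j, h0, mul_zero])
    · exfalso
      obtain ⟨a, b, hab, hne'⟩ := Function.not_injective_iff.mp hinj
      have hl : ∃ l, l ≠ i ∧ g l = j := by
        by_cases ha : a = i
        · subst ha
          have hbne : b ≠ a := fun h => hne' h.symm
          refine ⟨b, hbne, ?_⟩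
          simp only [Function.update_self, Function.update_apply, if_neg hbne] at hab
          exact hab.symm
        · by_cases hb : b = i
          · subst hb
            refine ⟨a, ha, ?_⟩
            rw [Function.update_apply, if_neg ha, Function.update_self] at hab
            exact hab
          · rw [Function.update_apply, if_neg ha, Function.update_apply, if_neg hb] at hab
            exact absurd (hginj hab) hne'
      obtain ⟨l, hli2, hgl⟩ := hl
      have hdet0 : (A.submatrix f (Function.update g i j)).det = 0 := by
        apply Matrix.det_zero_of_column_eq (Ne.symm hli2)
        intro k
        simp [Function.update_apply, if_neg hli2, hgl]
      exact hne (by rw [hBij i j, hdet0, mul_zero])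
  · -- independence is preserved
    intro S
    set φ : (m → F) →ₗ[F] (Fin r → F) :=
      (Matrix.mulVecLin D⁻¹) ∘ₗ LinearMap.funLeft F F f with hφdef
    have hφ : ∀ j, φ (Aᵀ j) = Bᵀ j := by
      intro j; funext i
      simp [hφdef, Matrix.mulVecLin, LinearMap.funLeft, Matrix.mulVec, dotProduct,
        hB, Matrix.mul_apply, transpose_apply]
    set ψ : (Fin r → F) →ₗ[F] (m → F) := Matrix.mulVecLin (A.submatrix id g) with hψdef
    have hψ : ∀ j, ψ (Bᵀ j) = Aᵀ j := by
      intro j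
      have hmem : Aᵀ j ∈ span F (Set.range (Aᵀ ∘ g)) := by
        rw [hrange, hspan]
        exact subset_span (Set.mem_range_self j)
      obtain ⟨c, hc⟩ := (mem_span_range_iff_exists_fun F).mp hmem
      have h1 : (fun k => A (f k) j) = D.mulVec c := by
        funext k
        have := congrFun hc (f k)
        simp only [Finset.sum_apply, Pi.smul_apply, Function.comp_apply,
          transpose_apply, smul_eq_mul] at this
        rw [Matrix.mulVec, dotProduct]
        rw [← this]
        exact Finset.sum_congr rfl fun i _ => mul_comm _ _
      have h2 : Bᵀ j = c := by
        funext i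
        have : Bᵀ j i = (D⁻¹.mulVec fun k => A (f k) j) i := by
          simp [hB, Matrix.mul_apply, Matrix.mulVec, dotProduct]
        rw [this, h1, Matrix.mulVec_mulVec, hDinv, Matrix.one_mulVec]
      rw [h2]
      funext x
      have := congrFun hc x
      simp only [Finset.sum_apply, Pi.smul_apply, Function.comp_apply,
        transpose_apply, smul_eq_mul] at this
      rw [hψdef, Matrix.mulVecLin_apply, Matrix.mulVec, dotProduct,
        Matrix.transpose_apply, ← this]
      exact Finset.sum_congr rfl fun i _ => by
        rw [Matrix.submatrix_apply, id, mul_comm]; rfl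
    constructor
    · intro h
      refine LinearIndependent.of_comp ψ ?_
      have heq : ψ ∘ (fun j : S => Bᵀ j.1) = fun j : S => Aᵀ j.1 :=
        funext fun j => hψ j.1
      rw [heq]; exact h
    · intro h
      refine LinearIndependent.of_comp φ ?_
      have heq : φ ∘ (fun j : S => Aᵀ j.1) = fun j : S => Bᵀ j.1 :=
        funext fun j => hφ j.1
      rw [heq]; exact h
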